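/- Define f(k,i) := (C(k,i)/2^k)·log₂(2^k/C(k,i)) for integers 0 ≤ i ≤ k. For every integer k ≥ 9 and every integer i with 0 ≤ i ≤ k: if i < ⌊k/2⌋ then f(k,i) ≤ f(k−1,i), and if 2i ≥ k then f(k,i) ≤ f(k−1,i−1). -/
import Mathlib

/-- The individual summand `f(k,i) := (C(k,i)/2^k)·log₂(2^k/C(k,i))` of the entropy
of the binomial distribution `Bin(k)`. -/
noncomputable def f (k i : ℕ) : ℝ :=
  ((k.choose i : ℝ) / 2^k) * Real.logb 2 ((2^k : ℝ) / (k.choose i))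

/-- Binomial coefficients for `m ≥ 8` are at most `70/256 · 2^m`. -/
lemma aux_choose_bound : ∀ m : ℕ, 8 ≤ m → ∀ i : ℕ, 256 * m.choose i ≤ 70 * 2^m := by
  intro m hm
  induction m, hm using Nat.le_induction with
  | base =>
    intro i
    have h := Nat.choose_le_middle i 8
    have h4 : Nat.choose 8 4 = 70 := by decide
    simp only [show (8:ℕ)/2 = 4 from rfl, h4] at h
    omega
  | succ m hm ih =>
    intro i
    match i with
    | 0 =>
      have : 256 ≤ 70 * 2^(m+1) := by
        have : 2^8 ≤ 2^(m+1) := Nat.pow_le_pow_right (by norm_num) (by omega)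
        norm_num at this ⊢; omega
      simpa using this
    | j+1 =>
      rw [Nat.choose_succ_succ, Nat.mul_add, pow_succ]
      have h1 := ih j
      have h2 := ih (j+1)
      simp only [Nat.succ_eq_add_one] at *
      omega

lemma aux_negMulLog_mono {x y : ℝ} (hx : 0 ≤ x) (hxy : x ≤ y) (hy : y ≤ Real.exp (-1)) :
    Real.negMulLog x ≤ Real.negMulLog y := by
  rcases eq_or_lt_of_le hx with rfl | hx0
  · rw [Real.negMulLog_zero]
    exact Real.negMulLog_nonneg (le_trans hx hxy)
      (hy.trans (by rw [Real.exp_le_one_iff]; norm_num))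
  · have hmono : MonotoneOn Real.negMulLog (Set.Icc x y) := by
      apply monotoneOn_of_deriv_nonneg (convex_Icc x y)
        Real.continuous_negMulLog.continuousOn
      · intro t ht
        rw [interior_Icc] at ht
        exact (Real.differentiableAt_negMulLog (ne_of_gt (hx0.trans ht.1))).differentiableWithinAt
      · intro t ht
        rw [interior_Icc] at ht
        have ht0 : 0 < t := hx0.trans ht.1
        rw [Real.deriv_negMulLog (ne_of_gt ht0)]
        have : Real.log t ≤ -1 := by
          calc Real.log t ≤ Real.log (Real.exp (-1)) :=
                Real.log_le_log ht0 (le_trans (le_of_lt ht.2) hy)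
            _ = -1 := Real.log_exp _
        linarith
    exact hmono (Set.left_mem_Icc.2 hxy) (Set.right_mem_Icc.2 hxy) hxy

lemma aux_f_eq (k i : ℕ) (h : i ≤ k) :
    f k i = Real.negMulLog ((k.choose i : ℝ) / 2^k) / Real.log 2 := by
  have hc : (0:ℝ) < k.choose i := by exact_mod_cast Nat.choose_pos h
  have h2 : (0:ℝ) < 2^k := by positivity
  rw [f, Real.logb, Real.negMulLog,
    show ((2:ℝ)^k / (k.choose i : ℝ)) = ((k.choose i : ℝ)/2^k)⁻¹ by field_simp,
    Real.log_inv]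
  ring

lemma aux_ratio_le (m j : ℕ) (hm : 8 ≤ m) :
    ((m.choose j : ℝ) / 2^m) ≤ Real.exp (-1) := by
  have h := aux_choose_bound m hm j
  have h2 : (0:ℝ) < 2^m := by positivity
  have hq : ((m.choose j : ℝ) / 2^m) ≤ 70/256 := by
    rw [div_le_div_iff₀ h2 (by norm_num)]
    calc (m.choose j : ℝ) * 256 = ((256 * m.choose j : ℕ) : ℝ) := by push_cast; ring
      _ ≤ ((70 * 2^m : ℕ) : ℝ) := by exact_mod_cast h
      _ = 70 * 2^m := by push_cast; ring
  refine hq.trans ?_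
  rw [Real.exp_neg, le_inv_comm₀ (by norm_num) (Real.exp_pos 1)]
  calc Real.exp 1 ≤ 2.7182818286 := (Real.exp_one_lt_d9).le
    _ ≤ (70/256)⁻¹ := by norm_num

/-- Main comparison: from `C(k,i) ≤ 2·C(k-1,j)` deduce `f k i ≤ f (k-1) j`. -/
lemma aux_main (k i j : ℕ) (hk : 9 ≤ k) (hik : i ≤ k) (hjk : j ≤ k - 1)
    (hle : k.choose i ≤ 2 * (k-1).choose j) : f k i ≤ f (k-1) j := by
  rw [aux_f_eq k i hik, aux_f_eq (k-1) j hjk]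
  have hlog2 : (0:ℝ) < Real.log 2 := Real.log_pos (by norm_num)
  apply div_le_div_of_nonneg_right ?_ hlog2.le
  have h2k : (0:ℝ) < 2^k := by positivity
  have h2k1 : (0:ℝ) < 2^(k-1) := by positivity
  have hpq : ((k.choose i : ℝ) / 2^k) ≤ ((k-1).choose j : ℝ) / 2^(k-1) := by
    rw [div_le_div_iff₀ h2k h2k1]
    have hpow : (2:ℝ)^k = 2 * 2^(k-1) := by
      rw [← pow_succ']
      congr 1
      omega
    rw [hpow]
    have : (k.choose i : ℝ) ≤ 2 * ((k-1).choose j : ℝ) := by exact_mod_cast hle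
    nlinarith
  exact aux_negMulLog_mono (by positivity) hpq (aux_ratio_le (k-1) j (by omega))

/-- For every `k ≥ 9` and `0 ≤ i ≤ k`: if `i < ⌊k/2⌋` then
`f(k,i) ≤ f(k−1,i)`, and if `2i ≥ k` then `f(k,i) ≤ f(k−1,i−1)`. -/
theorem stmt_6 (k : ℕ) (hk : 9 ≤ k) (i : ℕ) (hik : i ≤ k) :
    (i < k / 2 → f k i ≤ f (k-1) i) ∧ (k ≤ 2 * i → f k i ≤ f (k-1) (i-1)) := by
  constructor
  · intro hi
    apply aux_main k i i hk hik (by omega)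
    match i with
    | 0 => simp
    | j+1 =>
      obtain ⟨m, rfl⟩ : ∃ m, k = m + 1 := ⟨k-1, by omega⟩
      simp only [Nat.add_sub_cancel] at *
      have hpascal : (m+1).choose (j+1) = m.choose j + m.choose (j+1) :=
        Nat.choose_succ_succ m j
      have hmono : m.choose j ≤ m.choose (j+1) :=
        Nat.choose_le_succ_of_lt_half_left (by omega)
      omega
  · intro hi
    apply aux_main k i (i-1) hk hik (by omega)
    match i with
    | 0 => omega
    | j+1 =>
      obtain ⟨m, rfl⟩ : ∃ m, k = m + 1 := ⟨k-1, by omega⟩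
      simp only [Nat.add_sub_cancel] at *
      have hpascal : (m+1).choose (j+1) = m.choose j + m.choose (j+1) :=
        Nat.choose_succ_succ m j
      have hmono : m.choose (j+1) ≤ m.choose j := by
        rcases Nat.lt_or_ge j m with hjm | hjm
        · rcases eq_or_lt_of_le hi with heq | hlt
          · have hsym : m.choose (j+1) = m.choose (m - (j+1)) :=
              (Nat.choose_symm (by omega)).symm
            rw [hsym, show m - (j+1) = j by omega]
          · have e1 : m.choose (j+1) = m.choose (m-(j+1)) :=
              (Nat.choose_symm (by omega)).symm
            have e2 : m.choose j = m.choose (m-j) :=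
              (Nat.choose_symm (by omega)).symm
            rw [e1, e2, show m-j = (m-(j+1))+1 by omega]
            exact Nat.choose_le_succ_of_lt_half_left (by omega)
        · have : j = m := by omega
          subst this
          rw [Nat.choose_succ_self]
          exact Nat.zero_le _
      omega
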